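/- Let G be a finite simple graph with maximum degree at most Δ, let C be a proper partial coloring of G² with colors from [Δ²+1], let K be a set of vertices, let v ∈ K be uncolored, and let M be a colorful matching in K. Then 2·|Ψ(v) ∩ Ψ(K)| ≥ 2·d̊(v) + 2·(Δ² + 1 − d(v)) + |M| − 2·a_v (as an inequality of integers). -/

import Mathlib

open Finset

variable {V : Type*} [Fintype V] [DecidableEq V]

/-- Adjacency in the square graph `G²`: distinct vertices at distance at most 2 in `G`. -/
def sqAdj (G : SimpleGraph V) (u v : V) : Prop :=
  u ≠ v ∧ (G.Adj u v ∨ ∃ w, G.Adj u w ∧ G.Adj w v)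

instance (G : SimpleGraph V) [DecidableRel G.Adj] : DecidableRel (sqAdj G) := fun u v =>
  inferInstanceAs (Decidable (u ≠ v ∧ (G.Adj u v ∨ ∃ w, G.Adj u w ∧ G.Adj w v)))

/-- The distance-2 neighborhood `N²(v)`: the neighborhood of `v` in the square graph `G²`. -/
def N2 (G : SimpleGraph V) [DecidableRel G.Adj] (v : V) : Finset V :=
  univ.filter fun u => sqAdj G v u

/-- `C` is a proper partial coloring of `G²`: two vertices adjacent in `G²`
that are both colored receive distinct colors. -/
def ProperPartial (G : SimpleGraph V) {n : ℕ} (C : V → Option (Fin n)) : Prop :=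
  ∀ u v : V, sqAdj G u v → ∀ c : Fin n, C u = some c → C v ≠ some c

/-- `C(S)`: the set of colors used on the colored vertices of `S`. -/
def usedColors {n : ℕ} (C : V → Option (Fin n)) (S : Finset V) : Finset (Fin n) :=
  S.biUnion fun v => (C v).toFinset

/-- The palette of a set `S`: colors not used by any colored vertex of `S`.
For `S = K` this is the clique palette `Ψ(K)`; for `S = N²(v)` it is the palette `Ψ(v)`. -/
def palette {n : ℕ} (C : V → Option (Fin n)) (S : Finset V) : Finset (Fin n) :=
  univ \ usedColors C S

/-- A colorful matching in `K` w.r.t. `C`: a collection of pairwise disjoint pairs of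
distinct vertices of `K`, non-adjacent in `G²`, both colored with the same color. -/
def IsColorfulMatching (G : SimpleGraph V) {n : ℕ} (C : V → Option (Fin n))
    (K : Finset V) (M : Finset (V × V)) : Prop :=
  (∀ p ∈ M, p.1 ≠ p.2 ∧ p.1 ∈ K ∧ p.2 ∈ K ∧ ¬ sqAdj G p.1 p.2 ∧
      C p.1 ≠ none ∧ C p.1 = C p.2) ∧
  ∀ p ∈ M, ∀ q ∈ M, p ≠ q → ({p.1, p.2} : Finset V) ∩ {q.1, q.2} = ∅


lemma mem_usedColors {n : ℕ} (C : V → Option (Fin n)) (S : Finset V) (c : Fin n) :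
    c ∈ usedColors C S ↔ ∃ u ∈ S, C u = some c := by
  simp [usedColors, Option.mem_toFinset, Option.mem_def]

lemma card_usedColors_le {n : ℕ} (C : V → Option (Fin n)) (T : Finset V) :
    (usedColors C T).card ≤ (T.filter fun u => C u ≠ none).card := by
  classical
  calc (usedColors C T).card ≤ ∑ u ∈ T, (C u).toFinset.card := Finset.card_biUnion_le
    _ ≤ ∑ u ∈ T, (if C u ≠ none then 1 else 0) := by
        apply Finset.sum_le_sum; intro u _
        cases h : C u <;> simp
    _ = (T.filter fun u => C u ≠ none).card := (Finset.card_filter _ _).symm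

lemma usedColors_union {n : ℕ} (C : V → Option (Fin n)) (S T : Finset V) :
    usedColors C (S ∪ T) = usedColors C S ∪ usedColors C T := by
  ext c; simp [mem_usedColors, Finset.mem_union, or_and_right, exists_or]

/-- `2·|Ψ(v) ∩ Ψ(K)| ≥ 2·d̊(v) + 2·(Δ² + 1 − d(v)) + |M| − 2·a_v` for an uncolored
`v ∈ K` and a colorful matching `M` in `K`. -/
theorem two_mul_palette_inter_cliquePalette
    (G : SimpleGraph V) [DecidableRel G.Adj] (Δ : ℕ)
    (hdeg : ∀ v, G.degree v ≤ Δ)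
    (C : V → Option (Fin (Δ ^ 2 + 1))) (hC : ProperPartial G C)
    (K : Finset V) (v : V) (hv : v ∈ K) (hvunc : C v = none)
    (M : Finset (V × V)) (hM : IsColorfulMatching G C K M) :
    2 * ((((N2 G v).filter fun u => C u = none).card : ℤ))
        + 2 * ((Δ : ℤ) ^ 2 + 1 - ((N2 G v).card : ℤ))
        + (M.card : ℤ) - 2 * (((K \ N2 G v).card : ℤ))
      ≤ 2 * ((palette C (N2 G v) ∩ palette C K).card : ℤ) := by
  classical
  obtain ⟨hM1, hM2⟩ := hM
  set S := N2 G v with hS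
  set A := S ∪ K with hA
  set D := M.image Prod.snd with hD
  -- |D| = |M|
  have hDcard : D.card = M.card := by
    apply Finset.card_image_of_injOn
    intro p hp q hq hpq
    by_contra hne
    have hdisj := hM2 p hp q hq hne
    have hmem : p.2 ∈ ({p.1, p.2} : Finset V) ∩ {q.1, q.2} := by
      simp [hpq]
    rw [hdisj] at hmem
    exact absurd hmem (Finset.notMem_empty _)
  -- D is a set of colored vertices of A
  have hDsub : D ⊆ A.filter (fun u => C u ≠ none) := by
    intro x hx
    simp only [hD, Finset.mem_image] at hx
    obtain ⟨p, hp, rfl⟩ := hx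
    obtain ⟨_, _, hp2K, _, hc1, hc12⟩ := hM1 p hp
    simp only [Finset.mem_filter, hA, Finset.mem_union]
    exact ⟨Or.inr hp2K, by rw [← hc12]; exact hc1⟩
  -- removing D does not lose colors
  have hused : usedColors C A = usedColors C (A \ D) := by
    apply Finset.Subset.antisymm
    · intro c hc
      rw [mem_usedColors] at hc ⊢
      obtain ⟨u, hu, hcu⟩ := hc
      by_cases hud : u ∈ D
      · simp only [hD, Finset.mem_image] at hud
        obtain ⟨p, hp, rfl⟩ := hud
        obtain ⟨hne, hp1K, _, _, _, hc12⟩ := hM1 p hp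
        refine ⟨p.1, ?_, by rw [hc12]; exact hcu⟩
        rw [Finset.mem_sdiff]
        refine ⟨Finset.mem_union_right _ hp1K, ?_⟩
        intro h1
        simp only [hD, Finset.mem_image] at h1
        obtain ⟨q, hq, hq2⟩ := h1
        by_cases hpq : p = q
        · subst hpq; exact hne hq2.symm
        · have hdisj := hM2 p hp q hq hpq
          have hmem : p.1 ∈ ({p.1, p.2} : Finset V) ∩ {q.1, q.2} := by
            simp [← hq2]
          rw [hdisj] at hmem
          exact absurd hmem (Finset.notMem_empty _)
      · exact ⟨u, Finset.mem_sdiff.mpr ⟨hu, hud⟩, hcu⟩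
    · intro c hc
      rw [mem_usedColors] at hc ⊢
      obtain ⟨u, hu, hcu⟩ := hc
      exact ⟨u, (Finset.mem_sdiff.mp hu).1, hcu⟩
  -- filter over A \ D
  have hfs : (A \ D).filter (fun u => C u ≠ none)
      = A.filter (fun u => C u ≠ none) \ D := by
    ext x
    simp only [Finset.mem_filter, Finset.mem_sdiff]
    tauto
  have hcard_filter : ((A \ D).filter (fun u => C u ≠ none)).card + M.card
      = (A.filter (fun u => C u ≠ none)).card := by
    rw [hfs, ← hDcard]
    exact Finset.card_sdiff_add_card_eq_card hDsub
  -- main count: |C(A)| + |M| ≤ colored(S) + |K \ S|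
  have hAfilter : A.filter (fun u => C u ≠ none)
      ⊆ S.filter (fun u => C u ≠ none) ∪ (K \ S) := by
    intro x hx
    simp only [Finset.mem_filter, hA, Finset.mem_union, Finset.mem_sdiff] at hx ⊢
    rcases hx with ⟨hxa | hxk, hxc⟩
    · exact Or.inl ⟨hxa, hxc⟩
    · by_cases hxs : x ∈ S
      · exact Or.inl ⟨hxs, hxc⟩
      · exact Or.inr ⟨hxk, hxs⟩
  have hmain : (usedColors C A).card + M.card
      ≤ (S.filter (fun u => C u ≠ none)).card + (K \ S).card := by
    calc (usedColors C A).card + M.card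
        = (usedColors C (A \ D)).card + M.card := by rw [hused]
      _ ≤ ((A \ D).filter (fun u => C u ≠ none)).card + M.card := by
          exact add_le_add_left (card_usedColors_le _ _) _
      _ = (A.filter (fun u => C u ≠ none)).card := hcard_filter
      _ ≤ ((S.filter (fun u => C u ≠ none)) ∪ (K \ S)).card :=
          Finset.card_le_card hAfilter
      _ ≤ _ := Finset.card_union_le _ _
  -- colored + uncolored = |S|
  have hsplit : (S.filter (fun u => C u = none)).card
      + (S.filter (fun u => C u ≠ none)).card = S.card := by
    exact Finset.card_filter_add_card_filter_not (fun u => C u = none)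
  -- palette intersection
  have hpal : palette C S ∩ palette C K = (univ : Finset (Fin (Δ ^ 2 + 1))) \ usedColors C A := by
    rw [hA, usedColors_union, palette, palette, Finset.sdiff_union_distrib]
  have hpalcard : (palette C S ∩ palette C K).card + (usedColors C A).card
      = Δ ^ 2 + 1 := by
    rw [hpal, Finset.card_sdiff_add_card_eq_card (Finset.subset_univ _)]
    simp
  have hcast : ((Δ : ℤ)) ^ 2 = ((Δ ^ 2 : ℕ) : ℤ) := by push_cast; ring
  rw [hcast]
  omega
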